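/- Set R̂(ξ) := 2·T·R(2ξ)·T⁻¹. Then: R̂(ξ) − diag(2,0) has entries in ξ⁻¹·B[[ξ⁻¹]]; ε∂(R̂(ξ)) + [U^{NLS}(ξ), R̂(ξ)] = 0; tr R̂(ξ) = 2; and det R̂(ξ) = 0. Consequently R̂(ξ) = ev(R^{NLS}(ξ)), where R^{NLS}(ξ) is the unique basic matrix resolvent over 𝒜 and ev : 𝒜[ε] → B is the ring homomorphism with ev(qᵢ) = ∂^i(q), ev(rᵢ) = ∂^i(r), ev(ε) = ε, applied coefficientwise and entrywise. -/

import Mathlib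

set_option synthInstance.maxHeartbeats 1000000
set_option maxHeartbeats 1000000
set_option linter.unusedSectionVars false

noncomputable section

open scoped BigOperators

/-- Index set of the generators `qᵢ, rᵢ` of 𝒜. -/
inductive NLSVar : Type
  | q : ℕ → NLSVar
  | r : ℕ → NLSVar

/-- 𝒜 = ℂ[q₀, r₀, q₁, r₁, …]. -/
abbrev NLSA : Type := MvPolynomial NLSVar ℂ

/-- 𝒜[ε, ε⁻¹], as Laurent polynomials in ε over 𝒜. -/
abbrev NLSE : Type := LaurentPolynomial NLSA

instance : CommRing NLSE := inferInstance
instance : Algebra ℂ NLSE := inferInstance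

/-- The generator qᵢ viewed in 𝒜[ε,ε⁻¹]. -/
def qv (i : ℕ) : NLSE := LaurentPolynomial.C (MvPolynomial.X (NLSVar.q i))

/-- The generator rᵢ viewed in 𝒜[ε,ε⁻¹]. -/
def rv (i : ℕ) : NLSE := LaurentPolynomial.C (MvPolynomial.X (NLSVar.r i))

/-- ε ∈ 𝒜[ε,ε⁻¹]. -/
def eps : NLSE := LaurentPolynomial.T 1

/-- ε⁻¹ ∈ 𝒜[ε,ε⁻¹]. -/
def epsInv : NLSE := LaurentPolynomial.T (-1)

/-- Membership in the subring 𝒜[ε] ⊆ 𝒜[ε,ε⁻¹]: no negative powers of ε. -/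
def inAE (x : NLSE) : Prop := ∀ n : ℤ, n < 0 → (show ℤ →₀ NLSA from AddMonoidAlgebra.coeff x) n = 0

/-- The Laurent-series ring 𝒜[ε,ε⁻¹][[ξ⁻¹]][ξ]; the Hahn-series exponent `n`
records the power of ξ⁻¹. -/
abbrev NLSL : Type := LaurentSeries NLSE

instance : CommRing NLSL := inferInstance
instance : Algebra ℂ NLSL := inferInstance

/-- ξ as a Laurent series in ξ⁻¹. -/
def xiL : NLSL := HahnSeries.single (-1 : ℤ) 1

/-- Apply a zero-preserving map to all coefficients of a Laurent series. -/
def coeffMap {R S : Type*} [Zero R] [Zero S] (f : ZeroHom R S)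
    (x : HahnSeries ℤ R) : HahnSeries ℤ S where
  coeff n := f (x.coeff n)
  isPWO_support' := x.isPWO_support'.mono (by
    intro n hn
    simp only [Function.mem_support, ne_eq] at hn ⊢
    exact fun h => hn (by rw [h, map_zero]))

/-- The derivation ∂, applied coefficientwise to a Laurent series in ξ⁻¹. -/
def dmap (d : Derivation ℂ NLSE NLSE) : NLSL → NLSL :=
  coeffMap ⟨fun x => d x, map_zero d⟩

/-- `∂` is the (unique) derivation of 𝒜[ε,ε⁻¹] with ∂(qᵢ)=qᵢ₊₁, ∂(rᵢ)=rᵢ₊₁, ∂(ε)=0. -/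
def IsDel (del : Derivation ℂ NLSE NLSE) : Prop :=
  (∀ i, del (qv i) = qv (i + 1)) ∧ (∀ i, del (rv i) = rv (i + 1)) ∧ del eps = 0

/-- The constant embedding 𝒜[ε,ε⁻¹] → 𝒜[ε,ε⁻¹][[ξ⁻¹]][ξ]. -/
def CL (x : NLSE) : NLSL := HahnSeries.C x

/-- The matrix U(ξ) = [[−ξ, −q],[r, ξ]]. -/
def Umat : Matrix (Fin 2) (Fin 2) NLSL :=
  !![-xiL, -(CL (qv 0)); CL (rv 0), xiL]

/-- The matrix [[2+a, b],[c, −a]]. -/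
def Rmat (a b c : NLSL) : Matrix (Fin 2) (Fin 2) NLSL := !![2 + a, b; c, -a]

/-- `a, b, c` are the entries of the (unique) basic matrix resolvent
R(ξ) = [[2+a(ξ), b(ξ)],[c(ξ), −a(ξ)]]. -/
def IsMR (del : Derivation ℂ NLSE NLSE) (a b c : NLSL) : Prop :=
  (∀ n : ℤ, n ≤ 0 → a.coeff n = 0) ∧
  (∀ n : ℤ, n ≤ 0 → b.coeff n = 0) ∧
  (∀ n : ℤ, n ≤ 0 → c.coeff n = 0) ∧
  (∀ n : ℤ, inAE (a.coeff n)) ∧ (∀ n : ℤ, inAE (b.coeff n)) ∧ (∀ n : ℤ, inAE (c.coeff n)) ∧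
  CL eps • (Rmat a b c).map (dmap del)
      + (Umat * Rmat a b c - Rmat a b c * Umat) = 0 ∧
  (Rmat a b c).det = 0

/-- A_j, the ξ^{−j−1}-coefficient of a(ξ). -/
def coA (a : NLSL) (j : ℕ) : NLSE := a.coeff (j + 1 : ℤ)

/-- The NLS derivations D_j: derivations of 𝒜[ε,ε⁻¹] commuting with ∂, annihilating ε,
with D_j(q) = 2^{j+1} ε⁻¹ B_{j+1} and D_j(r) = 2^{j+1} ε⁻¹ C_{j+1}. -/
def IsNLSD (del : Derivation ℂ NLSE NLSE) (b c : NLSL)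
    (D : ℕ → Derivation ℂ NLSE NLSE) : Prop :=
  (∀ j x, D j (del x) = del (D j x)) ∧
  (∀ j, D j eps = 0) ∧
  (∀ j, D j (qv 0) = (2 : NLSE) ^ (j + 1) * epsInv * coA b (j + 1)) ∧
  (∀ j, D j (rv 0) = (2 : NLSE) ^ (j + 1) * epsInv * coA c (j + 1))

end
noncomputable section

variable {B : Type*} [CommRing B] [Algebra ℂ B]

/-- λ (resp. ξ), as a Laurent series in its inverse: the Hahn-series exponent `n`
records the power of λ⁻¹. -/
def lamB (B : Type*) [CommRing B] : LaurentSeries B := HahnSeries.single (-1 : ℤ) 1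

/-- Constants of B, as Laurent series. -/
def CB (x : B) : LaurentSeries B := HahnSeries.C x

/-- A derivation of B applied coefficientwise to a Laurent series. -/
def dmapB (d : Derivation ℂ B B) : LaurentSeries B → LaurentSeries B :=
  coeffMap ⟨fun x => d x, map_zero d⟩

/-- A ring automorphism of B applied coefficientwise to a Laurent series. -/
def amapB (f : B ≃+* B) : LaurentSeries B → LaurentSeries B :=
  coeffMap ⟨fun x => f x, map_zero f⟩

/-- Polynomial part in λ: keep the exponents n ≤ 0 of λ⁻¹. -/
def polyPartB (x : LaurentSeries B) : LaurentSeries B where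
  coeff n := if n ≤ 0 then x.coeff n else 0
  isPWO_support' := x.isPWO_support'.mono (by
    intro n hn
    simp only [Function.mem_support, ne_eq] at hn ⊢
    intro h
    apply hn
    rw [h]
    simp)

/-- The substitution λ = 2ξ: the coefficient of ξ⁻ⁿ in R(2ξ) is 2⁻ⁿ times the
coefficient of λ⁻ⁿ in R(λ). -/
def scaleHalfB (x : LaurentSeries B) : LaurentSeries B where
  coeff n := ((2 : ℂ) ^ (-n) : ℂ) • x.coeff n
  isPWO_support' := x.isPWO_support'.mono (by
    intro n hn
    simp only [Function.mem_support, ne_eq] at hn ⊢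
    exact fun h => hn (by rw [h, smul_zero]))

/-- U^{Toda}(λ) = [[v − λ, w],[−1, 0]]. -/
def UToda (v w : B) : Matrix (Fin 2) (Fin 2) (LaurentSeries B) :=
  !![CB v - lamB B, CB w; -1, 0]

/-- V₀(λ) = [[λ, −w],[1, Λ⁻¹(v)]]. -/
def VToda0 (v w : B) (lamAut : B ≃+* B) : Matrix (Fin 2) (Fin 2) (LaurentSeries B) :=
  !![lamB B, -(CB w); 1, CB (lamAut.symm v)]

/-- The hypotheses on the Toda basic matrix resolvent R(λ). -/
def IsTodaMR (eb v w : B) (lamAut : B ≃+* B) (del : Derivation ℂ B B)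
    (R : Matrix (Fin 2) (Fin 2) (LaurentSeries B)) : Prop :=
  (∀ i j : Fin 2, ∀ n : ℤ, n < 0 → (R i j).coeff n = 0) ∧
  (∀ i j : Fin 2, ∀ n : ℤ, n ≤ 0 →
    ((R - !![(1 : LaurentSeries B), 0; 0, 0]) i j).coeff n = 0) ∧
  (R.map (amapB lamAut) * UToda v w = UToda v w * R) ∧
  R.trace = 1 ∧
  R.det = 0 ∧
  (CB eb • R.map (dmapB del) = VToda0 v w lamAut * R - R * VToda0 v w lamAut)

/-- R̂(ξ) = 2·T·R(2ξ)·T⁻¹. -/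
def Rhat (r r' : B) (R : Matrix (Fin 2) (Fin 2) (LaurentSeries B)) :
    Matrix (Fin 2) (Fin 2) (LaurentSeries B) :=
  (2 : LaurentSeries B) •
    (!![(-1 : LaurentSeries B), 0; 0, CB r] * R.map scaleHalfB *
      !![(-1 : LaurentSeries B), 0; 0, CB r'])

end
noncomputable section

section AuxLemmas

open HahnSeries

variable {B : Type*} [CommRing B] [Algebra ℂ B]

lemma aux_two_cancel (y : B) (h : y + y = 0) : y = 0 := by
  have h2 : ((2:ℂ)⁻¹ + (2:ℂ)⁻¹) • y = (2:ℂ)⁻¹ • (y + y) := by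
    rw [add_smul, smul_add]
  rw [h, smul_zero] at h2
  norm_num at h2
  exact h2

lemma aux_mul_coeff_zero (x y : LaurentSeries B) (n : ℤ)
    (h : ∀ i j : ℤ, i + j = n → x.coeff i * y.coeff j = 0) : (x * y).coeff n = 0 := by
  rw [HahnSeries.coeff_mul]
  exact Finset.sum_eq_zero fun ij hij =>
    h ij.1 ij.2 ((Finset.mem_addAntidiagonal.mp hij).2.2)

lemma aux_mul_coeff_subset (x y : LaurentSeries B) {s t : Set ℤ} (hs : s.IsPWO) (ht : t.IsPWO)
    (hxs : x.support ⊆ s) (hyt : y.support ⊆ t) (n : ℤ) :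
    (x * y).coeff n = ∑ ij ∈ Finset.antidiagonal hs ht n, x.coeff ij.1 * y.coeff ij.2 := by
  rw [HahnSeries.coeff_mul_left' hs hxs]
  apply Finset.sum_subset
  · intro ij hij
    rw [Finset.mem_addAntidiagonal] at hij ⊢
    exact ⟨hij.1, hyt hij.2.1, hij.2.2⟩
  · intro ij hij hij2
    rw [Finset.mem_addAntidiagonal] at hij hij2
    have hy : y.coeff ij.2 = 0 := by
      by_contra hy
      exact hij2 ⟨hij.1, hy, hij.2.2⟩
    rw [hy, mul_zero]

lemma scaleHalfB_coeff (x : LaurentSeries B) (n : ℤ) :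
    (scaleHalfB x).coeff n = ((2:ℂ)^(-n)) • x.coeff n := rfl

lemma scaleHalfB_support (x : LaurentSeries B) : (scaleHalfB x).support ⊆ x.support := by
  intro n hn
  simp only [HahnSeries.mem_support] at hn ⊢
  intro h
  exact hn (by rw [scaleHalfB_coeff, h, smul_zero])

lemma scaleHalfB_mul (x y : LaurentSeries B) :
    scaleHalfB (x * y) = scaleHalfB x * scaleHalfB y := by
  ext n
  rw [scaleHalfB_coeff, HahnSeries.coeff_mul,
    aux_mul_coeff_subset (scaleHalfB x) (scaleHalfB y) x.isPWO_support y.isPWO_support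
      (scaleHalfB_support x) (scaleHalfB_support y) n,
    Finset.smul_sum]
  refine Finset.sum_congr rfl fun ij hij => ?_
  rw [Finset.mem_addAntidiagonal] at hij
  have hexp : (-ij.1) + (-ij.2) = -n := by
    have hn := hij.2.2
    omega
  rw [scaleHalfB_coeff, scaleHalfB_coeff, smul_mul_assoc, mul_smul_comm, smul_smul,
    ← zpow_add₀ (by norm_num : (2:ℂ) ≠ 0), hexp]

lemma scaleHalfB_add (x y : LaurentSeries B) :
    scaleHalfB (x + y) = scaleHalfB x + scaleHalfB y := by
  ext n
  simp [scaleHalfB_coeff, HahnSeries.coeff_add, smul_add]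

lemma scaleHalfB_one : scaleHalfB (1 : LaurentSeries B) = 1 := by
  ext n
  rw [scaleHalfB_coeff]
  by_cases h : n = 0 <;> simp [h, HahnSeries.coeff_one]

lemma scaleHalfB_zero : scaleHalfB (0 : LaurentSeries B) = 0 := by
  ext n
  simp [scaleHalfB_coeff]

/-- `scaleHalfB` as a ring homomorphism. -/
def scaleRH (B : Type*) [CommRing B] [Algebra ℂ B] : LaurentSeries B →+* LaurentSeries B where
  toFun := scaleHalfB
  map_one' := scaleHalfB_one
  map_mul' := scaleHalfB_mul
  map_zero' := scaleHalfB_zero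
  map_add' := scaleHalfB_add

lemma scaleRH_apply (x : LaurentSeries B) : scaleRH B x = scaleHalfB x := rfl

lemma CB_coeff (x : B) (n : ℤ) : (CB x).coeff n = if n = 0 then x else 0 := by
  simp [CB, HahnSeries.C_apply, HahnSeries.coeff_single]

lemma scaleHalfB_C (x : B) : scaleHalfB (CB x) = CB x := by
  ext n
  rw [scaleHalfB_coeff, CB_coeff]
  by_cases h : n = 0 <;> simp [h]

lemma scaleHalfB_lam : scaleHalfB (lamB B) = 2 * lamB B := by
  ext n
  rw [scaleHalfB_coeff]
  rw [two_mul, HahnSeries.coeff_add]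
  by_cases h : n = -1
  · subst h
    simp only [lamB, HahnSeries.coeff_single_same]
    norm_num
    rw [two_smul]
    norm_num
  · simp [lamB, HahnSeries.coeff_single_of_ne (by exact fun hc => h hc : n ≠ -1)]

lemma dmapB_coeff (d : Derivation ℂ B B) (x : LaurentSeries B) (n : ℤ) :
    (dmapB d x).coeff n = d (x.coeff n) := rfl

lemma dmapB_support (d : Derivation ℂ B B) (x : LaurentSeries B) :
    (dmapB d x).support ⊆ x.support := by
  intro n hn
  simp only [HahnSeries.mem_support] at hn ⊢
  intro h
  exact hn (by rw [dmapB_coeff, h, map_zero])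

lemma dmapB_add (d : Derivation ℂ B B) (x y : LaurentSeries B) :
    dmapB d (x + y) = dmapB d x + dmapB d y := by
  ext n
  simp [dmapB_coeff, HahnSeries.coeff_add]

lemma dmapB_neg (d : Derivation ℂ B B) (x : LaurentSeries B) :
    dmapB d (-x) = -(dmapB d x) := by
  ext n
  simp [dmapB_coeff, HahnSeries.coeff_neg]

lemma dmapB_sub (d : Derivation ℂ B B) (x y : LaurentSeries B) :
    dmapB d (x - y) = dmapB d x - dmapB d y := by
  ext n
  simp [dmapB_coeff, HahnSeries.coeff_sub]

lemma dmapB_mul (d : Derivation ℂ B B) (x y : LaurentSeries B) :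
    dmapB d (x * y) = dmapB d x * y + x * dmapB d y := by
  ext n
  rw [HahnSeries.coeff_add,
    aux_mul_coeff_subset (dmapB d x) y x.isPWO_support y.isPWO_support
      (dmapB_support d x) subset_rfl n,
    aux_mul_coeff_subset x (dmapB d y) x.isPWO_support y.isPWO_support
      subset_rfl (dmapB_support d y) n,
    dmapB_coeff, HahnSeries.coeff_mul, map_sum, ← Finset.sum_add_distrib]
  refine Finset.sum_congr rfl fun ij _ => ?_
  rw [Derivation.leibniz]
  simp only [smul_eq_mul, dmapB_coeff]
  ring

lemma dmapB_C (d : Derivation ℂ B B) (x : B) : dmapB d (CB x) = CB (d x) := by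
  ext n
  rw [dmapB_coeff, CB_coeff, CB_coeff]
  by_cases h : n = 0 <;> simp [h]

lemma dmapB_one (d : Derivation ℂ B B) : dmapB d (1 : LaurentSeries B) = 0 := by
  have h1 : (1 : LaurentSeries B) = CB 1 := by
    simp [CB]
  rw [h1, dmapB_C]
  simp [CB]

lemma dmapB_zero (d : Derivation ℂ B B) : dmapB d (0 : LaurentSeries B) = 0 := by
  ext n
  simp [dmapB_coeff]

lemma dmapB_two (d : Derivation ℂ B B) : dmapB d (2 : LaurentSeries B) = 0 := by
  have h1 : (2 : LaurentSeries B) = 1 + 1 := one_add_one_eq_two.symm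
  rw [h1, dmapB_add, dmapB_one, add_zero]

lemma dmapB_lam (d : Derivation ℂ B B) : dmapB d (lamB B) = 0 := by
  ext n
  rw [dmapB_coeff]
  by_cases h : n = -1
  · subst h
    simp [lamB, HahnSeries.coeff_single_same]
  · simp [lamB, HahnSeries.coeff_single_of_ne (by exact fun hc => h hc : n ≠ -1)]

lemma dmapB_scale (d : Derivation ℂ B B) (x : LaurentSeries B) :
    dmapB d (scaleHalfB x) = scaleHalfB (dmapB d x) := by
  ext n
  rw [dmapB_coeff, scaleHalfB_coeff, scaleHalfB_coeff, dmapB_coeff, Derivation.map_smul]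

lemma CB_mul (x y : B) : CB (x * y) = CB x * CB y := by
  simp [CB, map_mul]

lemma CB_one : CB (1 : B) = 1 := by simp [CB]

lemma CB_neg (x : B) : CB (-x) = -(CB x) := by simp [CB, map_neg]

lemma CB_mul_coeff (x : B) (y : LaurentSeries B) (n : ℤ) :
    (CB x * y).coeff n = x * y.coeff n := by
  rw [CB, HahnSeries.C_apply, HahnSeries.coeff_single_zero_mul]

lemma lam_mul_coeff (x : LaurentSeries B) (n : ℤ) :
    (lamB B * x).coeff n = x.coeff (n + 1) := by
  have h := HahnSeries.coeff_single_mul_add (r := (1:B)) (x := x) (a := n + 1) (b := (-1 : ℤ))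
  simp only [one_mul] at h
  have h2 : n + 1 + (-1 : ℤ) = n := by ring
  rw [h2] at h
  exact h

lemma scaleHalfB_neg (x : LaurentSeries B) : scaleHalfB (-x) = -(scaleHalfB x) := by
  ext n
  simp [scaleHalfB_coeff, HahnSeries.coeff_neg]

lemma scaleHalfB_sub (x y : LaurentSeries B) :
    scaleHalfB (x - y) = scaleHalfB x - scaleHalfB y := by
  ext n
  simp [scaleHalfB_coeff, HahnSeries.coeff_sub, smul_sub]

lemma CB_add (x y : B) : CB (x + y) = CB x + CB y := by simp [CB, map_add]

lemma CB_two : CB (2 : B) = (2 : LaurentSeries B) := by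
  rw [show (2:B) = 1 + 1 by norm_num, CB_add, CB_one, one_add_one_eq_two]

lemma LS_one_coeff (n : ℤ) : (1 : LaurentSeries B).coeff n = if n = 0 then 1 else 0 := by
  by_cases h : n = 0 <;> simp [h, HahnSeries.coeff_one]

lemma LS_twoMul_coeff (x : LaurentSeries B) (n : ℤ) :
    ((2 : LaurentSeries B) * x).coeff n = x.coeff n + x.coeff n := by
  rw [two_mul, HahnSeries.coeff_add]

lemma LS_two_coeff (n : ℤ) : (2 : LaurentSeries B).coeff n = if n = 0 then 2 else 0 := by
  rw [← CB_two, CB_coeff]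

lemma aux_hat (eb : B) (del : Derivation ℂ B B) (lam : B ≃+* B)
    (q r v w r' : B) (hr' : r * r' = 1) (hqr : q * r = w)
    (hdr : eb * del r = -(r * lam.symm v))
    (R : Matrix (Fin 2) (Fin 2) (LaurentSeries B))
    (hR : IsTodaMR eb v w lam del R) :
    (∀ i j : Fin 2, ∀ n : ℤ, n ≤ 0 →
      ((Rhat r r' R - !![(2 : LaurentSeries B), 0; 0, 0]) i j).coeff n = 0) ∧
    (CB eb • (Rhat r r' R).map (dmapB del)
        + (!![-(lamB B), -(CB q); CB r, lamB B] * Rhat r r' R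
            - Rhat r r' R * !![-(lamB B), -(CB q); CB r, lamB B]) = 0) ∧
    (Rhat r r' R).trace = 2 ∧
    (Rhat r r' R).det = 0 := by
  obtain ⟨h1, h2, _, h4, h5, h6⟩ := hR
  -- scalar relations in B
  have hd2 : r * del r' + r' * del r = 0 := by
    have hl := del.leibniz r r'
    rw [hr', del.map_one_eq_zero] at hl
    simp only [smul_eq_mul] at hl
    linear_combination -hl
  have hebr' : eb * del r' = r' * lam.symm v := by
    linear_combination eb * r' * hd2 - r'^2 * hdr - (eb * del r' - r' * lam.symm v) * hr'
  -- constant relations in LaurentSeries B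
  have hCrr' : CB r * CB r' = (1 : LaurentSeries B) := by
    rw [← CB_mul, hr', CB_one]
  have hCqrw : CB q * CB r = CB w := by rw [← CB_mul, hqr]
  have hCr'w : CB r' * CB w = CB q := by
    rw [← CB_mul]
    congr 1
    linear_combination q * hr' - r' * hqr
  have hCebdr : CB eb * CB (del r) = -(CB r * CB (lam.symm v)) := by
    rw [← CB_mul, hdr, ← CB_mul, CB_neg]
  have hCebdr' : CB eb * CB (del r') = CB r' * CB (lam.symm v) := by
    rw [← CB_mul, hebr', CB_mul]
  -- the normal form of Rhat
  have hform : Rhat r r' R =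
      !![(2 : LaurentSeries B) * scaleHalfB (R 0 0),
          -((2 : LaurentSeries B) * (CB r' * scaleHalfB (R 0 1)));
        -((2 : LaurentSeries B) * (CB r * scaleHalfB (R 1 0))),
          (2 : LaurentSeries B) * scaleHalfB (R 1 1)] := by
    refine Matrix.ext fun i j => ?_
    fin_cases i <;> fin_cases j <;>
      simp only [Rhat, Matrix.smul_apply, Matrix.mul_apply, Fin.sum_univ_two, Matrix.map_apply,
        smul_eq_mul, Matrix.of_apply, Matrix.cons_val', Matrix.cons_val_zero, Matrix.cons_val_one,
        Matrix.head_cons, Matrix.head_fin_const, Matrix.empty_val', Matrix.cons_val_fin_one,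
        Fin.mk_zero, Fin.mk_one, Fin.isValue]
    · ring
    · ring
    · ring
    · linear_combination (2 : LaurentSeries B) * scaleHalfB (R 1 1) * hCrr'
  -- scaled entrywise ODE equations
  have e00 := congrFun (congrFun h6 0) 0
  have e01 := congrFun (congrFun h6 0) 1
  have e10 := congrFun (congrFun h6 1) 0
  have e11 := congrFun (congrFun h6 1) 1
  simp only [VToda0, Matrix.smul_apply, Matrix.map_apply, Matrix.sub_apply, Matrix.mul_apply,
    Fin.sum_univ_two, smul_eq_mul, Matrix.of_apply, Matrix.cons_val', Matrix.cons_val_zero,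
    Matrix.cons_val_one, Matrix.head_cons, Matrix.head_fin_const, Matrix.empty_val',
    Matrix.cons_val_fin_one, Fin.mk_zero, Fin.mk_one, Fin.isValue, one_mul, mul_one] at e00 e01 e10 e11
  have f00 := congrArg scaleHalfB e00
  have f01 := congrArg scaleHalfB e01
  have f10 := congrArg scaleHalfB e10
  have f11 := congrArg scaleHalfB e11
  simp only [scaleHalfB_mul, scaleHalfB_add, scaleHalfB_sub, scaleHalfB_neg, scaleHalfB_C,
    scaleHalfB_lam, scaleHalfB_one, ← dmapB_scale] at f00 f01 f10 f11
  refine ⟨?_, ?_, ?_, ?_⟩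
  · -- coefficient vanishing
    intro i j n hn
    have hR00 : (R 0 0).coeff n = if n = 0 then 1 else 0 := by
      have h := h2 0 0 n hn
      rw [Matrix.sub_apply, HahnSeries.coeff_sub, sub_eq_zero] at h
      rw [h]
      simp [LS_one_coeff]
    have hR01 : (R 0 1).coeff n = 0 := by
      have h := h2 0 1 n hn
      rw [Matrix.sub_apply, HahnSeries.coeff_sub, sub_eq_zero] at h
      rw [h]
      simp
    have hR10 : (R 1 0).coeff n = 0 := by
      have h := h2 1 0 n hn
      rw [Matrix.sub_apply, HahnSeries.coeff_sub, sub_eq_zero] at h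
      rw [h]
      simp
    have hR11 : (R 1 1).coeff n = 0 := by
      have h := h2 1 1 n hn
      rw [Matrix.sub_apply, HahnSeries.coeff_sub, sub_eq_zero] at h
      rw [h]
      simp
    rw [hform]
    fin_cases i <;> fin_cases j <;>
      simp only [Matrix.sub_apply, Matrix.of_apply, Matrix.cons_val', Matrix.cons_val_zero,
        Matrix.cons_val_one, Matrix.head_cons, Matrix.head_fin_const, Matrix.empty_val',
        Matrix.cons_val_fin_one, Fin.mk_zero, Fin.mk_one, Fin.isValue,
        HahnSeries.coeff_sub, HahnSeries.coeff_neg, LS_twoMul_coeff,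
        CB_mul_coeff, scaleHalfB_coeff, hR00, hR01, hR10, hR11, LS_two_coeff,
        HahnSeries.coeff_zero, smul_zero, mul_zero, add_zero, neg_zero, sub_zero, sub_self]
    · by_cases h0 : n = 0 <;> simp [h0] <;> norm_num
  · -- the ODE
    rw [hform]
    refine Matrix.ext fun i j => ?_
    fin_cases i <;> fin_cases j <;>
      simp [Matrix.add_apply, Matrix.sub_apply, Matrix.smul_apply, Matrix.map_apply,
        Matrix.mul_apply, Fin.sum_univ_two, smul_eq_mul,
        dmapB_neg, dmapB_mul, dmapB_two, dmapB_C]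
    · linear_combination (2 : LaurentSeries B) * f00
        + (2 : LaurentSeries B) * scaleHalfB (R 1 0) * hCqrw
        + (2 : LaurentSeries B) * scaleHalfB (R 0 1) * hCrr'
    · linear_combination (-(2 : LaurentSeries B) * CB r') * f01
        + ((2 : LaurentSeries B) * scaleHalfB (R 1 1)
            - (2 : LaurentSeries B) * scaleHalfB (R 0 0)) * hCr'w
        + (-(2 : LaurentSeries B) * scaleHalfB (R 0 1)) * hCebdr'
    · linear_combination (-(2 : LaurentSeries B) * CB r) * f10
        + (-(2 : LaurentSeries B) * scaleHalfB (R 1 0)) * hCebdr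
    · linear_combination (2 : LaurentSeries B) * f11
        + (-(2 : LaurentSeries B) * scaleHalfB (R 0 1)) * hCrr'
        + (-(2 : LaurentSeries B) * scaleHalfB (R 1 0)) * hCqrw
  · -- trace
    have ht : R 0 0 + R 1 1 = 1 := by
      have := h4
      rw [Matrix.trace_fin_two] at this
      exact this
    have hts := congrArg scaleHalfB ht
    rw [scaleHalfB_add, scaleHalfB_one] at hts
    rw [hform, Matrix.trace_fin_two_of]
    linear_combination (2 : LaurentSeries B) * hts
  · -- det
    have hd : R 0 0 * R 1 1 - R 0 1 * R 1 0 = 0 := by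
      have := h5
      rw [Matrix.det_fin_two] at this
      exact this
    have hds := congrArg scaleHalfB hd
    rw [scaleHalfB_sub, scaleHalfB_mul, scaleHalfB_mul, scaleHalfB_zero] at hds
    rw [hform, Matrix.det_fin_two_of]
    linear_combination (4 : LaurentSeries B) * hds
      - ((4 : LaurentSeries B) * (scaleHalfB (R 0 1) * scaleHalfB (R 1 0))) * hCrr'

lemma aux_uniq (eb q r : B) (del : Derivation ℂ B B)
    (a b c a' b' c' : LaurentSeries B)
    (ha : ∀ n : ℤ, n ≤ 0 → a.coeff n = 0) (hb : ∀ n : ℤ, n ≤ 0 → b.coeff n = 0)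
    (hc : ∀ n : ℤ, n ≤ 0 → c.coeff n = 0) (ha' : ∀ n : ℤ, n ≤ 0 → a'.coeff n = 0)
    (hb' : ∀ n : ℤ, n ≤ 0 → b'.coeff n = 0) (hc' : ∀ n : ℤ, n ≤ 0 → c'.coeff n = 0)
    (hode : CB eb • (!![2 + a, b; c, -a] : Matrix (Fin 2) (Fin 2) (LaurentSeries B)).map (dmapB del)
        + (!![-(lamB B), -(CB q); CB r, lamB B] * !![2 + a, b; c, -a]
          - !![2 + a, b; c, -a] * !![-(lamB B), -(CB q); CB r, lamB B]) = 0)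
    (hode' : CB eb • (!![2 + a', b'; c', -a'] : Matrix (Fin 2) (Fin 2) (LaurentSeries B)).map (dmapB del)
        + (!![-(lamB B), -(CB q); CB r, lamB B] * !![2 + a', b'; c', -a']
          - !![2 + a', b'; c', -a'] * !![-(lamB B), -(CB q); CB r, lamB B]) = 0)
    (hdet : (!![2 + a, b; c, -a] : Matrix (Fin 2) (Fin 2) (LaurentSeries B)).det = 0)
    (hdet' : (!![2 + a', b'; c', -a'] : Matrix (Fin 2) (Fin 2) (LaurentSeries B)).det = 0) :
    a = a' ∧ b = b' ∧ c = c' := by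
  have g01 := congrFun (congrFun hode 0) 1
  have g10 := congrFun (congrFun hode 1) 0
  have g01' := congrFun (congrFun hode' 0) 1
  have g10' := congrFun (congrFun hode' 1) 0
  simp [Matrix.add_apply, Matrix.sub_apply, Matrix.smul_apply, Matrix.map_apply,
    Matrix.mul_apply, Fin.sum_univ_two, smul_eq_mul, dmapB_add, dmapB_two,
    dmapB_neg] at g01 g10 g01' g10'
  rw [Matrix.det_fin_two_of] at hdet hdet'
  have E1 : CB eb * dmapB del (b - b') = 2 * (lamB B * (b - b')) - 2 * (CB q * (a - a')) := by
    rw [dmapB_sub]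
    linear_combination g01 - g01'
  have E2 : CB eb * dmapB del (c - c') = -(2 * (lamB B * (c - c'))) - 2 * (CB r * (a - a')) := by
    rw [dmapB_sub]
    linear_combination g10 - g10'
  have ED : 2 * (a - a') + (a + a') * (a - a') + b * (c - c') + (b - b') * c' = 0 := by
    linear_combination hdet' - hdet
  have hsum : ∀ i : ℤ, i ≤ 0 → (a + a').coeff i = 0 := by
    intro i hi
    rw [HahnSeries.coeff_add, ha i hi, ha' i hi, add_zero]
  have key : ∀ n : ℤ, 0 ≤ n →
      ∀ m : ℤ, m ≤ n →
        (a - a').coeff m = 0 ∧ (b - b').coeff m = 0 ∧ (c - c').coeff m = 0 := by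
    refine Int.le_induction ?_ ?_
    · intro m hm
      refine ⟨?_, ?_, ?_⟩ <;> rw [HahnSeries.coeff_sub]
      · rw [ha m hm, ha' m hm, sub_zero]
      · rw [hb m hm, hb' m hm, sub_zero]
      · rw [hc m hm, hc' m hm, sub_zero]
    · intro n hn ih
      have hmul : ∀ x y : LaurentSeries B, (∀ i : ℤ, i ≤ 0 → x.coeff i = 0) →
          (∀ j : ℤ, j ≤ n → y.coeff j = 0) → (x * y).coeff (n + 1) = 0 := by
        intro x y hx hy
        apply aux_mul_coeff_zero
        intro i j hij
        by_cases hj : j ≤ n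
        · rw [hy j hj, mul_zero]
        · rw [hx i (by omega), zero_mul]
      have hmul' : ∀ x y : LaurentSeries B, (∀ i : ℤ, i ≤ n → x.coeff i = 0) →
          (∀ j : ℤ, j ≤ 0 → y.coeff j = 0) → (x * y).coeff (n + 1) = 0 := by
        intro x y hx hy
        apply aux_mul_coeff_zero
        intro i j hij
        by_cases hi : i ≤ n
        · rw [hx i hi, zero_mul]
        · rw [hy j (by omega), mul_zero]
      have hA : ∀ m : ℤ, m ≤ n → (a - a').coeff m = 0 := fun m hm => (ih m hm).1
      have hB : ∀ m : ℤ, m ≤ n → (b - b').coeff m = 0 := fun m hm => (ih m hm).2.1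
      have hC : ∀ m : ℤ, m ≤ n → (c - c').coeff m = 0 := fun m hm => (ih m hm).2.2
      have ha0 : a.coeff n - a'.coeff n = 0 := by
        have := hA n le_rfl
        rwa [HahnSeries.coeff_sub] at this
      have hAn1 : (a - a').coeff (n + 1) = 0 := by
        have hED := congrArg (fun x : LaurentSeries B => x.coeff (n + 1)) ED
        simp only [HahnSeries.coeff_add, LS_twoMul_coeff, HahnSeries.coeff_zero] at hED
        rw [hmul (a + a') (a - a') hsum hA, hmul b (c - c') hb hC,
          hmul' (b - b') c' hB hc'] at hED
        simp only [add_zero] at hED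
        exact aux_two_cancel _ hED
      have hBn1 : (b - b').coeff (n + 1) = 0 := by
        have h := congrArg (fun x : LaurentSeries B => x.coeff n) E1
        simp only [CB_mul_coeff, dmapB_coeff, LS_twoMul_coeff, lam_mul_coeff,
          HahnSeries.coeff_sub] at h
        have hb0 : b.coeff n - b'.coeff n = 0 := by
          have := hB n le_rfl
          rwa [HahnSeries.coeff_sub] at this
        rw [hb0, ha0, map_zero, mul_zero] at h
        rw [HahnSeries.coeff_sub]
        refine aux_two_cancel _ ?_
        linear_combination -h
      have hCn1 : (c - c').coeff (n + 1) = 0 := by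
        have h := congrArg (fun x : LaurentSeries B => x.coeff n) E2
        simp only [CB_mul_coeff, dmapB_coeff, LS_twoMul_coeff, lam_mul_coeff,
          HahnSeries.coeff_sub, HahnSeries.coeff_neg] at h
        have hc0 : c.coeff n - c'.coeff n = 0 := by
          have := hC n le_rfl
          rwa [HahnSeries.coeff_sub] at this
        rw [hc0, ha0, map_zero, mul_zero] at h
        rw [HahnSeries.coeff_sub]
        refine aux_two_cancel _ ?_
        linear_combination h
      intro m hm
      by_cases hm' : m ≤ n
      · exact ih m hm'
      · have hmn : m = n + 1 := by omega
        subst hmn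
        exact ⟨hAn1, hBn1, hCn1⟩
  have hall : ∀ m : ℤ, (a - a').coeff m = 0 ∧ (b - b').coeff m = 0 ∧ (c - c').coeff m = 0 := by
    intro m
    by_cases hm : m ≤ 0
    · refine ⟨?_, ?_, ?_⟩ <;> rw [HahnSeries.coeff_sub]
      · rw [ha m hm, ha' m hm, sub_zero]
      · rw [hb m hm, hb' m hm, sub_zero]
      · rw [hc m hm, hc' m hm, sub_zero]
    · exact key m (by omega) m le_rfl
  refine ⟨?_, ?_, ?_⟩ <;> rw [← sub_eq_zero]
  · ext m
    rw [(hall m).1, HahnSeries.coeff_zero]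
  · ext m
    rw [(hall m).2.1, HahnSeries.coeff_zero]
  · ext m
    rw [(hall m).2.2, HahnSeries.coeff_zero]

/-- A ring hom applied coefficientwise to Laurent series, as a ring hom. -/
def LSmap {B1 : Type*} [CommRing B1] {B2 : Type*} [CommRing B2] (g : B1 →+* B2) :
    LaurentSeries B1 →+* LaurentSeries B2 where
  toFun x := x.map g
  map_one' := by
    ext n
    simp [HahnSeries.coeff_one, apply_ite g]
  map_mul' x y := HahnSeries.map_mul g.toNonUnitalRingHom
  map_zero' := by ext n; simp
  map_add' x y := by ext n; simp

lemma LSmap_coeff {B1 : Type*} [CommRing B1] {B2 : Type*} [CommRing B2] (g : B1 →+* B2)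
    (x : LaurentSeries B1) (n : ℤ) : (LSmap g x).coeff n = g (x.coeff n) := rfl

lemma LSmap_single {B1 : Type*} [CommRing B1] {B2 : Type*} [CommRing B2] (g : B1 →+* B2)
    (m : ℤ) (x : B1) :
    LSmap g (HahnSeries.single m x) = HahnSeries.single m (g x) := by
  ext n
  rw [LSmap_coeff, HahnSeries.coeff_single, HahnSeries.coeff_single, apply_ite g, map_zero]

end AuxLemmas

section EvLemmas

lemma aux_eps_epsInv : epsInv * eps = (1 : NLSE) := by
  rw [eps, epsInv, ← LaurentPolynomial.T_add]
  norm_num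

lemma aux_ev_del {B : Type*} [CommRing B] [Algebra ℂ B]
    (eb ebi : B) (hebi : eb * ebi = 1)
    (del : Derivation ℂ B B) (hdeps : del eb = 0)
    (q r : B)
    (delN : Derivation ℂ NLSE NLSE) (hdelN : IsDel delN)
    (ev : NLSE →ₐ[ℂ] B)
    (hevq : ∀ i, ev (qv i) = (⇑del)^[i] q)
    (hevr : ∀ i, ev (rv i) = (⇑del)^[i] r)
    (heve : ev eps = eb) :
    ∀ x : NLSE, ev (delN x) = del (ev x) := by
  obtain ⟨hq, hr, he⟩ := hdelN
  have hTinv : delN epsInv = 0 := by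
    have h2 := delN.leibniz epsInv eps
    rw [aux_eps_epsInv, delN.map_one_eq_zero, he] at h2
    have h3 : eps * delN epsInv = 0 := by
      simpa [smul_eq_mul] using h2.symm
    calc delN epsInv = (epsInv * eps) * delN epsInv := by rw [aux_eps_epsInv, one_mul]
      _ = epsInv * (eps * delN epsInv) := by ring
      _ = 0 := by rw [h3, mul_zero]
  have hevinv : ev epsInv * eb = 1 := by
    rw [← heve, ← map_mul, aux_eps_epsInv, map_one]
  have hdeinv : del (ev epsInv) = 0 := by
    have h4 := del.leibniz (ev epsInv) eb
    rw [hevinv, del.map_one_eq_zero, hdeps] at h4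
    have h5 : eb * del (ev epsInv) = 0 := by
      simpa [smul_eq_mul] using h4.symm
    calc del (ev epsInv) = (eb * ebi) * del (ev epsInv) := by rw [hebi, one_mul]
      _ = ebi * (eb * del (ev epsInv)) := by ring
      _ = 0 := by rw [h5, mul_zero]
  set P : NLSE → Prop := fun x => ev (delN x) = del (ev x) with hP
  have hPadd : ∀ x y : NLSE, P x → P y → P (x + y) := by
    intro x y hx hy
    simp only [hP, map_add] at *
    rw [hx, hy]
  have hPmul : ∀ x y : NLSE, P x → P y → P (x * y) := by
    intro x y hx hy
    simp only [hP] at *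
    rw [delN.leibniz, smul_eq_mul, smul_eq_mul, map_add, map_mul, map_mul, map_mul,
      hx, hy, del.leibniz, smul_eq_mul, smul_eq_mul]
  have hPeps : P eps := by
    simp only [hP, he, heve, map_zero, hdeps]
  have hPepsInv : P epsInv := by
    simp only [hP, hTinv, map_zero, hdeinv]
  have hPT : ∀ n : ℤ, P (LaurentPolynomial.T n) := by
    intro n
    induction n using Int.induction_on with
    | zero =>
      simp only [hP, LaurentPolynomial.T_zero, delN.map_one_eq_zero, map_zero, map_one,
        del.map_one_eq_zero]
    | succ k ih =>
      have : (LaurentPolynomial.T (k + 1) : NLSE) = LaurentPolynomial.T k * eps := by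
        rw [eps, ← LaurentPolynomial.T_add]
      rw [this]
      exact hPmul _ _ ih hPeps
    | pred k ih =>
      have : (LaurentPolynomial.T (-k - 1) : NLSE) = LaurentPolynomial.T (-k) * epsInv := by
        rw [epsInv, ← LaurentPolynomial.T_add]
        congr 1
      rw [this]
      exact hPmul _ _ ih hPepsInv
  have hPX : ∀ v : NLSVar, P (LaurentPolynomial.C (MvPolynomial.X v)) := by
    intro v
    cases v with
    | q i =>
      show P (qv i)
      simp only [hP, hq i, hevq, Function.iterate_succ_apply', map_zero]
    | r i =>
      show P (rv i)
      simp only [hP, hr i, hevr, Function.iterate_succ_apply', map_zero]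
  have hPalg : ∀ c : ℂ, P (algebraMap ℂ NLSE c) := by
    intro c
    simp only [hP, Derivation.map_algebraMap, map_zero, AlgHom.commutes]
  have hPC : ∀ a : NLSA, P (LaurentPolynomial.C a) := by
    intro a
    induction a using MvPolynomial.induction_on with
    | C c =>
      have : (LaurentPolynomial.C (MvPolynomial.C c : NLSA) : NLSE) = algebraMap ℂ NLSE c := rfl
      rw [this]
      exact hPalg c
    | add p q hp2 hq2 =>
      rw [map_add]
      exact hPadd _ _ hp2 hq2
    | mul_X p v hp2 =>
      rw [map_mul]
      exact hPmul _ _ hp2 (hPX v)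
  intro x
  refine LaurentPolynomial.induction_on' x hPadd ?_
  intro n a
  exact hPmul _ _ (hPC a) (hPT n)

end EvLemmas

noncomputable section

/-- R̂(ξ) := 2·T·R(2ξ)·T⁻¹ satisfies the four defining conditions of
the basic NLS matrix resolvent over B, and consequently equals the image under
`ev` of the unique basic matrix resolvent over 𝒜. -/
theorem toda_resolvent_conjugation
    {B : Type*} [CommRing B] [Algebra ℂ B]
    (eb ebi : B) (hebi : eb * ebi = 1)
    (del : Derivation ℂ B B) (hdeps : del eb = 0)
    (lam : B ≃+* B) (hlamdel : ∀ x, lam (del x) = del (lam x)) (hlameps : lam eb = eb)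
    (q r v w : B) (q' r' : B) (hq' : q * q' = 1) (hr' : r * r' = 1)
    (hqr : q * r = w) (hqr1 : lam.symm q * r = 1)
    (hdq : eb * del q = q * v) (hdr : eb * del r = -(r * lam.symm v))
    (R : Matrix (Fin 2) (Fin 2) (LaurentSeries B))
    (hR : IsTodaMR eb v w lam del R)
    -- the unique basic matrix resolvent over 𝒜
    (delN : Derivation ℂ NLSE NLSE) (hdelN : IsDel delN)
    (aN bN cN : NLSL) (hRN : IsMR delN aN bN cN)
    -- the evaluation homomorphism ev : 𝒜[ε,ε⁻¹] → B
    (ev : NLSE →ₐ[ℂ] B)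
    (hevq : ∀ i, ev (qv i) = (⇑del)^[i] q)
    (hevr : ∀ i, ev (rv i) = (⇑del)^[i] r)
    (heve : ev eps = eb) :
    (∀ i j : Fin 2, ∀ n : ℤ, n ≤ 0 →
      ((Rhat r r' R - !![(2 : LaurentSeries B), 0; 0, 0]) i j).coeff n = 0) ∧
    (CB eb • (Rhat r r' R).map (dmapB del)
        + (!![-(lamB B), -(CB q); CB r, lamB B] * Rhat r r' R
            - Rhat r r' R * !![-(lamB B), -(CB q); CB r, lamB B]) = 0) ∧
    (Rhat r r' R).trace = 2 ∧
    (Rhat r r' R).det = 0 ∧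
    Rhat r r' R = (Rmat aN bN cN).map (coeffMap ⟨fun x => ev x, map_zero ev⟩) := by
  obtain ⟨hc1, hc2, hc3, hc4⟩ := aux_hat eb del lam q r v w r' hr' hqr hdr R hR
  refine ⟨hc1, hc2, hc3, hc4, ?_⟩
  have hevdel := aux_ev_del eb ebi hebi del hdeps q r delN hdelN ev hevq hevr heve
  have hLSdmap : ∀ x : NLSL, LSmap (ev : NLSE →+* B) (dmapB delN x)
      = dmapB del (LSmap (ev : NLSE →+* B) x) := by
    intro x
    ext n
    rw [LSmap_coeff, dmapB_coeff, dmapB_coeff, LSmap_coeff]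
    exact hevdel _
  have hLSCL : ∀ x : NLSE, LSmap (ev : NLSE →+* B) (CL x) = CB (ev x) := by
    intro x
    rw [CL, CB, HahnSeries.C_apply, HahnSeries.C_apply, LSmap_single]
    rfl
  have hLSxi : LSmap (ev : NLSE →+* B) xiL = lamB B := by
    rw [xiL, lamB, LSmap_single, map_one]
  have hq0 : ev (qv 0) = q := by rw [hevq 0, Function.iterate_zero_apply]
  have hr0 : ev (rv 0) = r := by rw [hevr 0, Function.iterate_zero_apply]
  -- trace relation, hat normal form
  have htr := hc3
  rw [Matrix.trace_fin_two] at htr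
  have hhatform : Rhat r r' R =
      !![2 + (Rhat r r' R 0 0 - 2), Rhat r r' R 0 1;
        Rhat r r' R 1 0, -(Rhat r r' R 0 0 - 2)] := by
    refine Matrix.ext fun i j => ?_
    fin_cases i <;> fin_cases j <;>
      simp only [Fin.mk_zero, Fin.mk_one, Fin.isValue, Matrix.cons_val', Matrix.cons_val_zero,
        Matrix.cons_val_one, Matrix.head_cons, Matrix.head_fin_const, Matrix.empty_val',
        Matrix.cons_val_fin_one, Matrix.of_apply]
    · ring
    · linear_combination htr
  -- hat-side coefficient vanishing
  have haH : ∀ n : ℤ, n ≤ 0 → (Rhat r r' R 0 0 - 2).coeff n = 0 := by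
    intro n hn
    have h := hc1 0 0 n hn
    simpa [Matrix.sub_apply] using h
  have hbH : ∀ n : ℤ, n ≤ 0 → (Rhat r r' R 0 1).coeff n = 0 := by
    intro n hn
    have h := hc1 0 1 n hn
    simpa [Matrix.sub_apply] using h
  have hcH : ∀ n : ℤ, n ≤ 0 → (Rhat r r' R 1 0).coeff n = 0 := by
    intro n hn
    have h := hc1 1 0 n hn
    simpa [Matrix.sub_apply] using h
  -- ev-side data
  obtain ⟨hN1, hN2, hN3, _, _, _, hN7, hN8⟩ := hRN
  have haE : ∀ n : ℤ, n ≤ 0 → (LSmap (ev : NLSE →+* B) aN).coeff n = 0 := by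
    intro n hn
    rw [LSmap_coeff, hN1 n hn, map_zero]
  have hbE : ∀ n : ℤ, n ≤ 0 → (LSmap (ev : NLSE →+* B) bN).coeff n = 0 := by
    intro n hn
    rw [LSmap_coeff, hN2 n hn, map_zero]
  have hcE : ∀ n : ℤ, n ≤ 0 → (LSmap (ev : NLSE →+* B) cN).coeff n = 0 := by
    intro n hn
    rw [LSmap_coeff, hN3 n hn, map_zero]
  -- transfer the NLS ODE through ev
  have hdmap_eq : dmap delN = dmapB delN := rfl
  rw [hdmap_eq] at hN7
  have n00 := congrFun (congrFun hN7 0) 0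
  have n01 := congrFun (congrFun hN7 0) 1
  have n10 := congrFun (congrFun hN7 1) 0
  have n11 := congrFun (congrFun hN7 1) 1
  simp [Umat, Rmat, Matrix.add_apply, Matrix.sub_apply, Matrix.smul_apply, Matrix.map_apply,
    Matrix.mul_apply, Fin.sum_univ_two, smul_eq_mul, dmapB_add, dmapB_two,
    dmapB_neg] at n00 n01 n10 n11
  have m00 := congrArg (LSmap (ev : NLSE →+* B)) n00
  have m01 := congrArg (LSmap (ev : NLSE →+* B)) n01
  have m10 := congrArg (LSmap (ev : NLSE →+* B)) n10
  have m11 := congrArg (LSmap (ev : NLSE →+* B)) n11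
  simp only [map_mul, map_add, map_sub, map_neg, map_zero, map_ofNat, hLSdmap, hLSCL, hLSxi,
    heve, hq0, hr0] at m00 m01 m10 m11
  have hodeE : CB eb • (!![2 + LSmap (ev : NLSE →+* B) aN, LSmap (ev : NLSE →+* B) bN;
        LSmap (ev : NLSE →+* B) cN, -(LSmap (ev : NLSE →+* B) aN)] :
          Matrix (Fin 2) (Fin 2) (LaurentSeries B)).map (dmapB del)
      + (!![-(lamB B), -(CB q); CB r, lamB B]
            * !![2 + LSmap (ev : NLSE →+* B) aN, LSmap (ev : NLSE →+* B) bN;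
                LSmap (ev : NLSE →+* B) cN, -(LSmap (ev : NLSE →+* B) aN)]
          - !![2 + LSmap (ev : NLSE →+* B) aN, LSmap (ev : NLSE →+* B) bN;
                LSmap (ev : NLSE →+* B) cN, -(LSmap (ev : NLSE →+* B) aN)]
            * !![-(lamB B), -(CB q); CB r, lamB B]) = 0 := by
    refine Matrix.ext fun i j => ?_
    fin_cases i <;> fin_cases j <;>
      simp [Matrix.add_apply, Matrix.sub_apply, Matrix.smul_apply, Matrix.map_apply,
        Matrix.mul_apply, Fin.sum_univ_two, smul_eq_mul, dmapB_add, dmapB_two, dmapB_neg]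
    · linear_combination m00
    · linear_combination m01
    · linear_combination m10
    · linear_combination m11
  -- dets
  have hdetE : (!![2 + LSmap (ev : NLSE →+* B) aN, LSmap (ev : NLSE →+* B) bN;
        LSmap (ev : NLSE →+* B) cN, -(LSmap (ev : NLSE →+* B) aN)] :
          Matrix (Fin 2) (Fin 2) (LaurentSeries B)).det = 0 := by
    rw [Matrix.det_fin_two_of]
    simp only [Rmat] at hN8
    rw [Matrix.det_fin_two_of] at hN8
    have h := congrArg (LSmap (ev : NLSE →+* B)) hN8
    simp only [map_sub, map_mul, map_add, map_neg, map_ofNat, map_zero] at h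
    linear_combination h
  have hodeH : CB eb • (!![2 + (Rhat r r' R 0 0 - 2), Rhat r r' R 0 1;
        Rhat r r' R 1 0, -(Rhat r r' R 0 0 - 2)] :
          Matrix (Fin 2) (Fin 2) (LaurentSeries B)).map (dmapB del)
      + (!![-(lamB B), -(CB q); CB r, lamB B]
            * !![2 + (Rhat r r' R 0 0 - 2), Rhat r r' R 0 1;
                Rhat r r' R 1 0, -(Rhat r r' R 0 0 - 2)]
          - !![2 + (Rhat r r' R 0 0 - 2), Rhat r r' R 0 1;
                Rhat r r' R 1 0, -(Rhat r r' R 0 0 - 2)]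
            * !![-(lamB B), -(CB q); CB r, lamB B]) = 0 := by
    rw [← hhatform]
    exact hc2
  have hdetH : (!![2 + (Rhat r r' R 0 0 - 2), Rhat r r' R 0 1;
        Rhat r r' R 1 0, -(Rhat r r' R 0 0 - 2)] :
          Matrix (Fin 2) (Fin 2) (LaurentSeries B)).det = 0 := by
    rw [← hhatform]
    exact hc4
  obtain ⟨ea, eb2, ec2⟩ := aux_uniq eb q r del
    (Rhat r r' R 0 0 - 2) (Rhat r r' R 0 1) (Rhat r r' R 1 0)
    (LSmap (ev : NLSE →+* B) aN) (LSmap (ev : NLSE →+* B) bN) (LSmap (ev : NLSE →+* B) cN)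
    haH hbH hcH haE hbE hcE hodeH hodeE hdetH hdetE
  have hmapform : (Rmat aN bN cN).map (coeffMap ⟨fun x => ev x, map_zero ev⟩)
      = !![2 + LSmap (ev : NLSE →+* B) aN, LSmap (ev : NLSE →+* B) bN;
          LSmap (ev : NLSE →+* B) cN, -(LSmap (ev : NLSE →+* B) aN)] := by
    have hco : ∀ x : NLSL, coeffMap ⟨fun x => ev x, map_zero ev⟩ x = LSmap (ev : NLSE →+* B) x :=
      fun _ => rfl
    refine Matrix.ext fun i j => ?_
    fin_cases i <;> fin_cases j <;>
      simp only [Rmat, Matrix.map_apply, Fin.mk_zero, Fin.mk_one, Fin.isValue,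
        Matrix.cons_val', Matrix.cons_val_zero, Matrix.cons_val_one, Matrix.head_cons,
        Matrix.head_fin_const, Matrix.empty_val', Matrix.cons_val_fin_one, Matrix.of_apply,
        hco, map_add, map_neg, map_ofNat]
  rw [hmapform, hhatform, ea, eb2, ec2]

end
end
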